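/- Let γ > 0 and let f(z) = ∑_{n≥0} a_n z^n be analytic on the unit disk with a_n ≥ 0 for all n. Then f belongs to the Bloch type space B^γ (i.e., sup_{z∈D} (1-|z|²)^γ |f'(z)| < ∞) if and only if sup_{n≥1} n^{-γ} ∑_{k=1}^n k a_k < ∞. -/

import Mathlib

open MeasureTheory Set Filter

/-- `g` is almost decreasing on `s`. -/
def AlmostDecreasingOn (g : ℝ → ℝ) (s : Set ℝ) : Prop :=
  ∃ C > 0, ∀ x ∈ s, ∀ y ∈ s, x < y → g y ≤ C * g x

/-- `g` is almost increasing on `s`. -/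
def AlmostIncreasingOn (g : ℝ → ℝ) (s : Set ℝ) : Prop :=
  ∃ C > 0, ∀ x ∈ s, ∀ y ∈ s, x < y → g x ≤ C * g y

/-- `ν` is a normal weight on `[0,1)` with exponents `a ≤ b`. -/
def IsNormal (ν : ℝ → ℝ) (a b : ℝ) : Prop :=
  0 < a ∧ a ≤ b ∧ (∀ s ∈ Ico (0:ℝ) 1, 0 < ν s) ∧ ContinuousOn ν (Ico 0 1) ∧
  AlmostDecreasingOn (fun s => ν s / (1 - s ^ 2) ^ a) (Ico 0 1) ∧
  AlmostIncreasingOn (fun s => ν s / (1 - s ^ 2) ^ b) (Ico 0 1)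

/-- Membership in the normal-weight Bloch space `B_ν`. -/
def MemBloch (ν : ℝ → ℝ) (f : ℂ → ℂ) : Prop :=
  DifferentiableOn ℂ f (Metric.ball 0 1) ∧
  BddAbove (Set.range fun z : Metric.ball (0:ℂ) 1 => ν ‖(z : ℂ)‖ * ‖deriv f z‖)

/-- The Bloch norm `|f(0)| + sup ν(|z|)|f'(z)|`. -/
noncomputable def blochNorm (ν : ℝ → ℝ) (f : ℂ → ℂ) : ℝ :=
  ‖f 0‖ + ⨆ z : Metric.ball (0:ℂ) 1, ν ‖(z : ℂ)‖ * ‖deriv f z‖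

/-- `ω̃(t) = ∫_0^t ds/ω(s)`. -/
noncomputable def tildeW (ω : ℝ → ℝ) (t : ℝ) : ℝ := ∫ s in (0:ℝ)..t, 1 / ω s

/-- The generalized integral type Hilbert operator `I_{μ,α+1}`. -/
noncomputable def intHilbert (μ : Measure ℝ) (α : ℝ) (f : ℂ → ℂ) (z : ℂ) : ℂ :=
  ∫ t in Ico (0:ℝ) 1, f (t : ℂ) / (1 - (t : ℂ) * z) ^ ((α : ℂ) + 1) ∂μ

/-- The sublinear generalized integral type Hilbert operator. -/
noncomputable def tildeIntHilbert (μ : Measure ℝ) (α : ℝ) (f : ℂ → ℂ) (z : ℂ) : ℂ :=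
  ∫ t in Ico (0:ℝ) 1, (‖f (t : ℂ)‖ : ℂ) / (1 - (t : ℂ) * z) ^ ((α : ℂ) + 1) ∂μ

/-- Boundedness of an operator from `B_{ν₁}` to `B_{ν₂}`. -/
def IsBddOp (ν₁ ν₂ : ℝ → ℝ) (T : (ℂ → ℂ) → ℂ → ℂ) : Prop :=
  ∃ C > 0, ∀ f, MemBloch ν₁ f → MemBloch ν₂ (T f) ∧ blochNorm ν₂ (T f) ≤ C * blochNorm ν₁ f

/-- Compactness of an operator from `B_{ν₁}` to `B_{ν₂}` (sequential characterization). -/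
def IsCompactOp (ν₁ ν₂ : ℝ → ℝ) (T : (ℂ → ℂ) → ℂ → ℂ) : Prop :=
  IsBddOp ν₁ ν₂ T ∧
  ∀ (h : ℕ → ℂ → ℂ) (M : ℝ), (∀ k, MemBloch ν₁ (h k) ∧ blochNorm ν₁ (h k) ≤ M) →
    TendstoLocallyUniformlyOn (fun k z => h k z) (fun _ => 0) atTop (Metric.ball (0:ℂ) 1) →
    Tendsto (fun k => blochNorm ν₂ (T (h k))) atTop (nhds 0)

lemma auxP {γ : ℝ} (hγ : 0 < γ) {x : ℝ} (hx : 0 ≤ x) :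
    x ^ γ ≤ γ ^ γ * Real.exp x := by
  rcases eq_or_lt_of_le hx with h | h
  · rw [← h, Real.zero_rpow hγ.ne']
    positivity
  · have hlog : Real.log (x / γ) ≤ x / γ - 1 := Real.log_le_sub_one_of_pos (by positivity)
    rw [Real.log_div h.ne' hγ.ne'] at hlog
    have hlog2 : γ * (Real.log x - Real.log γ) ≤ γ * (x / γ - 1) :=
      mul_le_mul_of_nonneg_left hlog hγ.le
    have hγx : γ * (x / γ) = x := by field_simp
    have hkey : Real.log x * γ ≤ x + Real.log γ * γ := by nlinarith
    calc x ^ γ = Real.exp (Real.log x * γ) := by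
          rw [Real.rpow_def_of_pos h]
      _ ≤ Real.exp (x + Real.log γ * γ) := Real.exp_le_exp.2 hkey
      _ = γ ^ γ * Real.exp x := by
          rw [Real.exp_add, Real.rpow_def_of_pos hγ, mul_comm]

lemma auxQ {γ : ℝ} (hγ : 0 < γ) {x l : ℝ} (hx : 0 ≤ x) (hl : 0 < l) :
    x ^ γ * Real.exp (-(x * l)) ≤ γ ^ γ * l ^ (-γ) := by
  have hlγ : (0:ℝ) < l ^ γ := Real.rpow_pos_of_pos hl γ
  have h2 : x ^ γ * l ^ γ = (x * l) ^ γ := (Real.mul_rpow hx hl.le).symm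
  have h1 : (x * l) ^ γ * Real.exp (-(x * l)) ≤ γ ^ γ := by
    have := mul_le_mul_of_nonneg_right (auxP hγ (show (0:ℝ) ≤ x * l by positivity))
      (Real.exp_nonneg (-(x * l)))
    rwa [mul_assoc, ← Real.exp_add, add_neg_cancel, Real.exp_zero, mul_one] at this
  rw [Real.rpow_neg hl.le, mul_comm (γ ^ γ), ← div_eq_inv_mul, le_div_iff₀ hlγ]
  calc x ^ γ * Real.exp (-(x * l)) * l ^ γ = (x * l) ^ γ * Real.exp (-(x * l)) := by
        rw [← h2]; ring
    _ ≤ γ ^ γ := h1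

-- R: n^γ * r^n ≤ γ^γ * (1-r)^(-γ) for r ∈ [0,1)
lemma auxR {γ : ℝ} (hγ : 0 < γ) {r : ℝ} (hr0 : 0 ≤ r) (hr1 : r < 1) (n : ℕ) :
    (n : ℝ) ^ γ * r ^ n ≤ γ ^ γ * (1 - r) ^ (-γ) := by
  have h1r : (0:ℝ) < 1 - r := by linarith
  rcases eq_or_lt_of_le hr0 with h | h
  · rcases Nat.eq_zero_or_pos n with hn | hn
    · subst hn
      simp [Real.zero_rpow hγ.ne']
      positivity
    · rw [← h, zero_pow hn.ne', mul_zero]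
      positivity
  · have hlog : Real.log r < 0 := Real.log_neg h hr1
    set l : ℝ := -Real.log r with hl
    have hlpos : 0 < l := by simp [hl]; linarith
    have hrn : r ^ n = Real.exp (-((n:ℝ) * l)) := by
      have : -((n:ℝ) * l) = (n:ℝ) * Real.log r := by rw [hl]; ring
      rw [this, Real.exp_nat_mul, Real.exp_log h]
    rw [hrn]
    calc (n:ℝ) ^ γ * Real.exp (-((n:ℝ) * l)) ≤ γ ^ γ * l ^ (-γ) :=
          auxQ hγ (Nat.cast_nonneg n) hlpos
      _ ≤ γ ^ γ * (1 - r) ^ (-γ) := by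
          apply mul_le_mul_of_nonneg_left _ (by positivity)
          have hle : 1 - r ≤ l := by
            have := Real.log_le_sub_one_of_pos h
            rw [hl]; linarith
          rw [Real.rpow_neg h1r.le, Real.rpow_neg (by linarith : (0:ℝ) ≤ l)]
          apply inv_anti₀ (Real.rpow_pos_of_pos h1r γ)
          exact Real.rpow_le_rpow h1r.le hle hγ.le

lemma aux_summable_nx {x : ℝ} (hx0 : 0 ≤ x) (hx1 : x < 1) :
    Summable (fun n : ℕ => (n : ℝ) * x ^ (n - 1)) := by
  rw [← summable_nat_add_iff 1]
  have hx : ‖x‖ < 1 := by rwa [Real.norm_eq_abs, abs_of_nonneg hx0]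
  have h1 : Summable (fun n : ℕ => (n : ℝ) ^ 1 * x ^ n) :=
    summable_pow_mul_geometric_of_norm_lt_one 1 hx
  have h2 : Summable (fun n : ℕ => x ^ n) := summable_geometric_of_lt_one hx0 hx1
  apply (h1.add h2).congr
  intro n
  push_cast
  ring

lemma aux_summable_deriv {c : ℕ → ℝ} (hc : ∀ n, 0 ≤ c n)
    (hsum : ∀ ρ : ℝ, 0 ≤ ρ → ρ < 1 → Summable (fun n => c n * ρ ^ n))
    {r : ℝ} (hr0 : 0 ≤ r) (hr1 : r < 1) :
    Summable (fun n : ℕ => (n : ℝ) * c n * r ^ (n - 1)) := by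
  set ρ : ℝ := (1 + r) / 2 with hρ
  have hρ0 : 0 < ρ := by rw [hρ]; linarith
  have hρ1 : ρ < 1 := by rw [hρ]; linarith
  have hrρ : r < ρ := by rw [hρ]; linarith
  clear_value ρ
  have hS := hsum ρ hρ0.le hρ1
  obtain ⟨K, hcK, hK0⟩ : ∃ K : ℝ, (∀ n, c n * ρ ^ n ≤ K) ∧ 0 ≤ K := by
    refine ⟨∑' n, c n * ρ ^ n, fun n => Summable.le_tsum hS n (fun m _ => mul_nonneg (hc m) (by positivity)), ?_⟩
    exact le_trans (mul_nonneg (hc 0) (by positivity)) (Summable.le_tsum hS 0 (fun m _ => mul_nonneg (hc m) (by positivity)))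
  have hcomp : Summable (fun n : ℕ => (K / ρ) * ((n : ℝ) * (r / ρ) ^ (n - 1))) := by
    apply Summable.mul_left
    exact aux_summable_nx (by positivity) (by rw [div_lt_one hρ0]; exact hrρ)
  apply Summable.of_nonneg_of_le (fun n => mul_nonneg (mul_nonneg (by positivity) (hc n)) (by positivity)) _ hcomp
  intro n
  rcases Nat.eq_zero_or_pos n with hn | hn
  · subst hn; simp
  · have hρn : ρ ^ n = ρ ^ (n - 1) * ρ := by
      conv_lhs => rw [← Nat.succ_pred_eq_of_pos hn]
      rw [pow_succ]
      rfl
    have hcn : c n ≤ K / ρ ^ n := by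
      rw [le_div_iff₀ (by positivity)]
      exact hcK n
    calc (n : ℝ) * c n * r ^ (n - 1) ≤ (n : ℝ) * (K / ρ ^ n) * r ^ (n - 1) := by
          apply mul_le_mul_of_nonneg_right _ (by positivity)
          exact mul_le_mul_of_nonneg_left hcn (by positivity)
      _ = (K / ρ) * ((n : ℝ) * (r / ρ) ^ (n - 1)) := by
          rw [div_pow, hρn]
          field_simp

lemma aux_anti {a b e : ℝ} (ha : 0 < a) (hab : a ≤ b) (he : 0 ≤ e) :
    b ^ (-e) ≤ a ^ (-e) := by
  rw [Real.rpow_neg (le_trans ha.le hab), Real.rpow_neg ha.le]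
  exact inv_anti₀ (Real.rpow_pos_of_pos ha e) (Real.rpow_le_rpow ha.le hab he)

lemma aux_geom_sum {r : ℝ} (hr0 : 0 ≤ r) (hr1 : r < 1) (N : ℕ) :
    ∑ j ∈ Finset.range N, r ^ j ≤ (1 - r)⁻¹ := by
  have h := Summable.sum_le_tsum (Finset.range N) (fun i _ => by positivity)
    (summable_geometric_of_lt_one hr0 hr1)
  rwa [tsum_geometric_of_lt_one hr0 hr1] at h

lemma auxT {γ : ℝ} (hγ : 0 < γ) {r : ℝ} (hr0 : 0 ≤ r) (hr1 : r < 1) (N : ℕ) :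
    ∑ j ∈ Finset.range N, ((j : ℝ) + 1) ^ γ * r ^ j
      ≤ (2 ^ γ * γ ^ γ + 1) * 2 ^ (1 + γ) * (1 - r) ^ (-(1 + γ)) := by
  set s : ℝ := Real.sqrt r with hs
  have hs0 : 0 ≤ s := Real.sqrt_nonneg r
  have hs1 : s < 1 := by
    rw [hs]
    exact (Real.sqrt_lt' one_pos).2 (by linarith : r < 1 ^ 2)
  have hs2 : s ^ 2 = r := Real.sq_sqrt hr0
  have h1s : 0 < 1 - s := by linarith
  have h1r : 0 < 1 - r := by linarith
  have hhalf : (1 - r) / 2 ≤ 1 - s := by nlinarith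
  have hK1 : (1 : ℝ) ≤ 2 ^ γ * γ ^ γ + 1 := by
    have : (0:ℝ) ≤ 2 ^ γ * γ ^ γ := by positivity
    linarith
  have hone : (1 : ℝ) ≤ (1 - s) ^ (-γ) :=
    Real.one_le_rpow_of_pos_of_le_one_of_nonpos h1s (by linarith) (by linarith)
  have hpt : ∀ j : ℕ, ((j : ℝ) + 1) ^ γ * s ^ j ≤ (2 ^ γ * γ ^ γ + 1) * (1 - s) ^ (-γ) := by
    intro j
    rcases Nat.eq_zero_or_pos j with hj | hj
    · subst hj
      simpa using le_trans hone (le_mul_of_one_le_left (by positivity) hK1)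
    · have hj1 : ((j : ℝ) + 1) ^ γ ≤ 2 ^ γ * (j : ℝ) ^ γ := by
        rw [← Real.mul_rpow (by norm_num) (Nat.cast_nonneg j)]
        apply Real.rpow_le_rpow (by positivity) _ hγ.le
        have : (1 : ℝ) ≤ (j : ℝ) := by exact_mod_cast hj
        linarith
      calc ((j : ℝ) + 1) ^ γ * s ^ j ≤ 2 ^ γ * ((j : ℝ) ^ γ * s ^ j) := by
            rw [← mul_assoc]
            exact mul_le_mul_of_nonneg_right hj1 (by positivity)
        _ ≤ 2 ^ γ * (γ ^ γ * (1 - s) ^ (-γ)) :=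
            mul_le_mul_of_nonneg_left (auxR hγ hs0 hs1 j) (by positivity)
        _ ≤ (2 ^ γ * γ ^ γ + 1) * (1 - s) ^ (-γ) := by
            rw [← mul_assoc]
            apply mul_le_mul_of_nonneg_right (by linarith) (by positivity)
  have hsum : ∑ j ∈ Finset.range N, ((j : ℝ) + 1) ^ γ * r ^ j
      ≤ (2 ^ γ * γ ^ γ + 1) * (1 - s) ^ (-γ) * ∑ j ∈ Finset.range N, s ^ j := by
    rw [Finset.mul_sum]
    apply Finset.sum_le_sum
    intro j _
    have hrs : r ^ j = s ^ j * s ^ j := by rw [← hs2]; ring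
    rw [hrs, ← mul_assoc]
    exact mul_le_mul_of_nonneg_right (hpt j) (by positivity)
  have hgeo : ∑ j ∈ Finset.range N, s ^ j ≤ (1 - s)⁻¹ := aux_geom_sum hs0 hs1 N
  calc ∑ j ∈ Finset.range N, ((j : ℝ) + 1) ^ γ * r ^ j
      ≤ (2 ^ γ * γ ^ γ + 1) * (1 - s) ^ (-γ) * (1 - s)⁻¹ := by
        refine le_trans hsum (mul_le_mul_of_nonneg_left hgeo (by positivity))
    _ = (2 ^ γ * γ ^ γ + 1) * (1 - s) ^ (-(1 + γ)) := by
        rw [mul_assoc, ← Real.rpow_neg_one (1 - s), ← Real.rpow_add h1s]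
        ring_nf
    _ ≤ (2 ^ γ * γ ^ γ + 1) * 2 ^ (1 + γ) * (1 - r) ^ (-(1 + γ)) := by
        have h1 : (1 - s) ^ (-(1 + γ)) ≤ ((1 - r) / 2) ^ (-(1 + γ)) :=
          aux_anti (by positivity) hhalf (by linarith)
        have h2 : ((1 - r) / 2) ^ (-(1 + γ)) = 2 ^ (1 + γ) * (1 - r) ^ (-(1 + γ)) := by
          have h3 : (0:ℝ) < 2 ^ (1 + γ) := by positivity
          have h4 : (0:ℝ) < (1 - r) ^ (1 + γ) := by positivity
          rw [Real.rpow_neg (by positivity : (0:ℝ) ≤ (1 - r) / 2),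
            Real.div_rpow h1r.le (by norm_num), Real.rpow_neg h1r.le]
          field_simp
        rw [mul_assoc]
        apply mul_le_mul_of_nonneg_left _ (by positivity)
        rw [← h2]; exact h1

lemma aux_abel (c : ℕ → ℝ) (r : ℝ) (N : ℕ) :
    ∑ k ∈ Finset.range N, ((k : ℝ) + 1) * c (k + 1) * r ^ k
      = (∑ k ∈ Finset.Icc 1 N, (k : ℝ) * c k) * r ^ N
        + (1 - r) * ∑ j ∈ Finset.range N, (∑ k ∈ Finset.Icc 1 (j + 1), (k : ℝ) * c k) * r ^ j := by
  induction N with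
  | zero => simp
  | succ N ih =>
    rw [Finset.sum_range_succ, ih,
      Finset.sum_range_succ (fun j => (∑ k ∈ Finset.Icc 1 (j + 1), (k : ℝ) * c k) * r ^ j),
      Finset.sum_Icc_succ_top (by omega : 1 ≤ N + 1)]
    push_cast
    ring

lemma aux_partial_bound {γ : ℝ} (hγ : 0 < γ) {c : ℕ → ℝ} (hc : ∀ n, 0 ≤ c n) {M : ℝ}
    (hM : ∀ n : ℕ, (∑ k ∈ Finset.Icc 1 n, (k : ℝ) * c k) ≤ M * (n : ℝ) ^ γ)
    (hM0 : 0 ≤ M) {r : ℝ} (hr0 : 0 ≤ r) (hr1 : r < 1) (N : ℕ) :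
    ∑ n ∈ Finset.range N, (n : ℝ) * c n * r ^ (n - 1)
      ≤ M * (γ ^ γ + (2 ^ γ * γ ^ γ + 1) * 2 ^ (1 + γ)) * (1 - r) ^ (-γ) := by
  have h1r : (0:ℝ) < 1 - r := by linarith
  rcases Nat.eq_zero_or_pos N with hN | hN
  · subst hN; simp; positivity
  obtain ⟨N', rfl⟩ : ∃ N', N = N' + 1 := ⟨N - 1, by omega⟩
  have hshift : ∑ n ∈ Finset.range (N' + 1), (n : ℝ) * c n * r ^ (n - 1)
      = ∑ k ∈ Finset.range N', ((k : ℝ) + 1) * c (k + 1) * r ^ k := by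
    rw [Finset.sum_range_succ']
    simp
  rw [hshift, aux_abel]
  have hb1 : (∑ k ∈ Finset.Icc 1 N', (k : ℝ) * c k) * r ^ N'
      ≤ M * (γ ^ γ * (1 - r) ^ (-γ)) := by
    calc (∑ k ∈ Finset.Icc 1 N', (k : ℝ) * c k) * r ^ N'
        ≤ (M * (N' : ℝ) ^ γ) * r ^ N' :=
          mul_le_mul_of_nonneg_right (hM N') (by positivity)
      _ = M * ((N' : ℝ) ^ γ * r ^ N') := by ring
      _ ≤ M * (γ ^ γ * (1 - r) ^ (-γ)) :=
          mul_le_mul_of_nonneg_left (auxR hγ hr0 hr1 N') hM0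
  have hb2 : ∑ j ∈ Finset.range N', (∑ k ∈ Finset.Icc 1 (j + 1), (k : ℝ) * c k) * r ^ j
      ≤ M * ((2 ^ γ * γ ^ γ + 1) * 2 ^ (1 + γ) * (1 - r) ^ (-(1 + γ))) := by
    calc ∑ j ∈ Finset.range N', (∑ k ∈ Finset.Icc 1 (j + 1), (k : ℝ) * c k) * r ^ j
        ≤ ∑ j ∈ Finset.range N', (M * ((j : ℝ) + 1) ^ γ) * r ^ j := by
          apply Finset.sum_le_sum
          intro j _
          apply mul_le_mul_of_nonneg_right _ (by positivity)
          have := hM (j + 1)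
          push_cast at this
          exact this
      _ = M * ∑ j ∈ Finset.range N', ((j : ℝ) + 1) ^ γ * r ^ j := by
          rw [Finset.mul_sum]; congr 1; ext j; ring
      _ ≤ M * ((2 ^ γ * γ ^ γ + 1) * 2 ^ (1 + γ) * (1 - r) ^ (-(1 + γ))) :=
          mul_le_mul_of_nonneg_left (auxT hγ hr0 hr1 N') hM0
  have hpow : (1 - r) * (1 - r) ^ (-(1 + γ)) = (1 - r) ^ (-γ) := by
    nth_rewrite 1 [← Real.rpow_one (1 - r)]
    rw [← Real.rpow_add h1r]
    ring_nf
  calc (∑ k ∈ Finset.Icc 1 N', (k : ℝ) * c k) * r ^ N'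
        + (1 - r) * ∑ j ∈ Finset.range N', (∑ k ∈ Finset.Icc 1 (j + 1), (k : ℝ) * c k) * r ^ j
      ≤ M * (γ ^ γ * (1 - r) ^ (-γ))
        + (1 - r) * (M * ((2 ^ γ * γ ^ γ + 1) * 2 ^ (1 + γ) * (1 - r) ^ (-(1 + γ)))) := by
        apply add_le_add hb1
        exact mul_le_mul_of_nonneg_left hb2 h1r.le
    _ = M * (γ ^ γ + (2 ^ γ * γ ^ γ + 1) * 2 ^ (1 + γ)) * (1 - r) ^ (-γ) := by
        rw [show (1 - r) * (M * ((2 ^ γ * γ ^ γ + 1) * 2 ^ (1 + γ) * (1 - r) ^ (-(1 + γ))))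
            = M * ((2 ^ γ * γ ^ γ + 1) * 2 ^ (1 + γ)) * ((1 - r) * (1 - r) ^ (-(1 + γ))) by ring,
          hpow]
        ring

lemma aux_hsum {c : ℕ → ℝ} {f : ℂ → ℂ}
    (hf : ∀ z ∈ Metric.ball (0:ℂ) 1, HasSum (fun n : ℕ => (c n : ℂ) * z ^ n) (f z)) :
    ∀ ρ : ℝ, 0 ≤ ρ → ρ < 1 → Summable (fun n => c n * ρ ^ n) := by
  intro ρ hρ0 hρ1
  have hmem : (ρ : ℂ) ∈ Metric.ball (0:ℂ) 1 := by
    simp [Complex.norm_real, abs_of_nonneg hρ0, hρ1]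
  have h := (hf _ hmem).summable
  rw [← Complex.summable_ofReal]
  apply h.congr
  intro n
  push_cast
  ring

lemma aux_hasDerivAt {f : ℂ → ℂ} {c : ℕ → ℝ} (hc : ∀ n, 0 ≤ c n)
    (hf : ∀ z ∈ Metric.ball (0:ℂ) 1, HasSum (fun n : ℕ => (c n : ℂ) * z ^ n) (f z))
    {z : ℂ} (hz : z ∈ Metric.ball (0:ℂ) 1) :
    HasDerivAt f (∑' n : ℕ, (n : ℂ) * (c n : ℂ) * z ^ (n - 1)) z := by
  have hz1 : ‖z‖ < 1 := by simpa [Metric.mem_ball] using hz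
  set ρ : ℝ := (‖z‖ + 1) / 2 with hρ
  have hρ0 : 0 ≤ ρ := by rw [hρ]; positivity
  have hρ1 : ρ < 1 := by rw [hρ]; linarith
  have hzρ : ‖z‖ < ρ := by rw [hρ]; linarith
  clear_value ρ
  have hu : Summable (fun n : ℕ => (n : ℝ) * c n * ρ ^ (n - 1)) :=
    aux_summable_deriv hc (aux_hsum hf) hρ0 hρ1
  have key : HasDerivAt (fun y : ℂ => ∑' n : ℕ, (c n : ℂ) * y ^ n)
      (∑' n : ℕ, (c n : ℂ) * ((n : ℂ) * z ^ (n - 1))) z := by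
    have hρpos : 0 < ρ := by rw [hρ]; positivity
    refine hasDerivAt_tsum_of_isPreconnected hu Metric.isOpen_ball
      (convex_ball (0:ℂ) ρ).isPreconnected
      (fun n y _ => (hasDerivAt_pow n y).const_mul _)
      (fun n y hy => ?_)
      (show (0:ℂ) ∈ Metric.ball 0 ρ by simpa [Metric.mem_ball] using hρpos)
      ((hf 0 (by simp [Metric.mem_ball])).summable)
      (show z ∈ Metric.ball (0:ℂ) ρ by simpa [Metric.mem_ball] using hzρ)
    have hy' : ‖y‖ ≤ ρ := le_of_lt (by simpa [Metric.mem_ball] using hy)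
    rw [norm_mul, norm_mul, Complex.norm_real, Real.norm_eq_abs, abs_of_nonneg (hc n),
      Complex.norm_natCast, norm_pow]
    calc c n * ((n : ℝ) * ‖y‖ ^ (n - 1)) ≤ c n * ((n : ℝ) * ρ ^ (n - 1)) := by
          apply mul_le_mul_of_nonneg_left _ (hc n)
          exact mul_le_mul_of_nonneg_left (pow_le_pow_left₀ (norm_nonneg y) hy' _)
            (Nat.cast_nonneg n)
      _ = (n : ℝ) * c n * ρ ^ (n - 1) := by ring
  have heq : f =ᶠ[nhds z] (fun y : ℂ => ∑' n : ℕ, (c n : ℂ) * y ^ n) := by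
    filter_upwards [Metric.isOpen_ball.mem_nhds hz] with y hy
    exact ((hf y hy).tsum_eq).symm
  have := key.congr_of_eventuallyEq heq
  apply this.congr_deriv
  apply tsum_congr
  intro n
  ring

lemma aux_norm_deriv {f : ℂ → ℂ} {c : ℕ → ℝ} (hc : ∀ n, 0 ≤ c n)
    (hf : ∀ z ∈ Metric.ball (0:ℂ) 1, HasSum (fun n : ℕ => (c n : ℂ) * z ^ n) (f z))
    {z : ℂ} (hz : z ∈ Metric.ball (0:ℂ) 1) :
    ‖deriv f z‖ ≤ ∑' n : ℕ, (n : ℝ) * c n * ‖z‖ ^ (n - 1) := by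
  have hz1 : ‖z‖ < 1 := by simpa [Metric.mem_ball] using hz
  have hnorm : ∀ n : ℕ, ‖(n : ℂ) * (c n : ℂ) * z ^ (n - 1)‖ = (n : ℝ) * c n * ‖z‖ ^ (n - 1) := by
    intro n
    rw [norm_mul, norm_mul, Complex.norm_natCast, Complex.norm_real, Real.norm_eq_abs,
      abs_of_nonneg (hc n), norm_pow]
  have hsumm : Summable (fun n : ℕ => ‖(n : ℂ) * (c n : ℂ) * z ^ (n - 1)‖) :=
    (aux_summable_deriv hc (aux_hsum hf) (norm_nonneg z) hz1).congr fun n => (hnorm n).symm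
  rw [(aux_hasDerivAt hc hf hz).deriv]
  calc ‖∑' n : ℕ, (n : ℂ) * (c n : ℂ) * z ^ (n - 1)‖
      ≤ ∑' n : ℕ, ‖(n : ℂ) * (c n : ℂ) * z ^ (n - 1)‖ := norm_tsum_le_tsum_norm hsumm
    _ = ∑' n : ℕ, (n : ℝ) * c n * ‖z‖ ^ (n - 1) := tsum_congr hnorm

lemma aux_deriv_real {f : ℂ → ℂ} {c : ℕ → ℝ} (hc : ∀ n, 0 ≤ c n)
    (hf : ∀ z ∈ Metric.ball (0:ℂ) 1, HasSum (fun n : ℕ => (c n : ℂ) * z ^ n) (f z))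
    {r : ℝ} (hr0 : 0 ≤ r) (hr1 : r < 1) :
    deriv f (r : ℂ) = ((∑' n : ℕ, (n : ℝ) * c n * r ^ (n - 1) : ℝ) : ℂ) := by
  have hmem : (r : ℂ) ∈ Metric.ball (0:ℂ) 1 := by
    simp [Metric.mem_ball, Complex.norm_real, abs_of_nonneg hr0, hr1]
  rw [(aux_hasDerivAt hc hf hmem).deriv, Complex.ofReal_tsum]
  apply tsum_congr
  intro n
  push_cast
  ring

private theorem stmt6_aux (γ : ℝ) (hγ : 0 < γ) (f : ℂ → ℂ) (c : ℕ → ℝ) (hc : ∀ n, 0 ≤ c n)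
    (hf : ∀ z ∈ Metric.ball (0:ℂ) 1, HasSum (fun n : ℕ => (c n : ℂ) * z ^ n) (f z)) :
    MemBloch (fun s => (1 - s ^ 2) ^ γ) f ↔
      ∃ M : ℝ, ∀ n : ℕ, 1 ≤ n →
        (n : ℝ) ^ (-γ) * ∑ k ∈ Finset.Icc 1 n, (k : ℝ) * c k ≤ M := by
  constructor
  · rintro ⟨hdiff, C, hC⟩
    have hCbound : ∀ z : Metric.ball (0:ℂ) 1,
        (1 - ‖(z : ℂ)‖ ^ 2) ^ γ * ‖deriv f (z : ℂ)‖ ≤ C := by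
      intro z
      exact hC (Set.mem_range_self z)
    refine ⟨3 * 2 ^ γ * C, fun n hn => ?_⟩
    have hn1 : (1:ℝ) ≤ (n:ℝ) := by exact_mod_cast hn
    have hnpos : (0:ℝ) < n := by linarith
    set r : ℝ := (n : ℝ) / ((n : ℝ) + 1) with hr
    have hr0 : 0 ≤ r := by rw [hr]; positivity
    have hr1 : r < 1 := by rw [hr, div_lt_one (by linarith)]; linarith
    have hmem : (r : ℂ) ∈ Metric.ball (0:ℂ) 1 := by
      simp [Metric.mem_ball, Complex.norm_real, abs_of_nonneg hr0, hr1]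
    have hnormr : ‖(r : ℂ)‖ = r := by
      rw [Complex.norm_real, Real.norm_eq_abs, abs_of_nonneg hr0]
    set G : ℝ := ∑' m : ℕ, (m : ℝ) * c m * r ^ (m - 1) with hG
    have hGsum : Summable (fun m : ℕ => (m : ℝ) * c m * r ^ (m - 1)) :=
      aux_summable_deriv hc (aux_hsum hf) hr0 hr1
    have hG0 : 0 ≤ G :=
      tsum_nonneg fun m => mul_nonneg (mul_nonneg (Nat.cast_nonneg m) (hc m)) (by positivity)
    have hkey : (1 - r ^ 2) ^ γ * G ≤ C := by
      have := hCbound ⟨(r : ℂ), hmem⟩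
      rwa [hnormr, aux_deriv_real hc hf hr0 hr1, Complex.norm_real, Real.norm_eq_abs,
        abs_of_nonneg hG0] at this
    have h1r2 : (0:ℝ) ≤ 1 - r ^ 2 := by nlinarith
    have hC0 : 0 ≤ C := le_trans (mul_nonneg (Real.rpow_nonneg h1r2 γ) hG0) hkey
    set S : ℝ := ∑ k ∈ Finset.Icc 1 n, (k : ℝ) * c k with hS
    have hS0 : 0 ≤ S :=
      Finset.sum_nonneg fun k _ => mul_nonneg (Nat.cast_nonneg k) (hc k)
    -- S * r ^ (n-1) ≤ G
    have hSG : S * r ^ (n - 1) ≤ G := by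
      calc S * r ^ (n - 1) = ∑ k ∈ Finset.Icc 1 n, (k : ℝ) * c k * r ^ (n - 1) := by
            rw [hS, Finset.sum_mul]
        _ ≤ ∑ k ∈ Finset.Icc 1 n, (k : ℝ) * c k * r ^ (k - 1) := by
            apply Finset.sum_le_sum
            intro k hk
            apply mul_le_mul_of_nonneg_left _ (mul_nonneg (Nat.cast_nonneg k) (hc k))
            apply pow_le_pow_of_le_one hr0 hr1.le
            have := (Finset.mem_Icc.1 hk).2
            omega
        _ ≤ G := Summable.sum_le_tsum _ (fun m _ => mul_nonneg (mul_nonneg (Nat.cast_nonneg m) (hc m))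
            (by positivity)) hGsum
    -- r ^ n ≥ 1/3
    have hrn : (1:ℝ) / 3 ≤ r ^ n := by
      have he : (1 + 1 / (n:ℝ)) ^ n ≤ 3 := by
        have h1 : (1 : ℝ) / n + 1 ≤ Real.exp (1 / n) := Real.add_one_le_exp _
        have h2 : ((1:ℝ) + 1 / n) ^ n ≤ Real.exp (1 / n) ^ n := by
          apply pow_le_pow_left₀ (by positivity)
          linarith
        have h3 : Real.exp (1 / (n:ℝ)) ^ n = Real.exp 1 := by
          rw [← Real.exp_nat_mul]
          congr 1
          field_simp
        have h4 : Real.exp 1 ≤ 3 := by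
          have := Real.exp_one_lt_d9
          linarith
        calc ((1:ℝ) + 1 / n) ^ n ≤ Real.exp (1 / n) ^ n := h2
          _ = Real.exp 1 := h3
          _ ≤ 3 := h4
      have hprod : r ^ n * (1 + 1 / (n:ℝ)) ^ n = 1 := by
        rw [← mul_pow, hr]
        have : (n:ℝ) / ((n:ℝ) + 1) * (1 + 1 / n) = 1 := by field_simp
        rw [this, one_pow]
      have hp1 : (0:ℝ) < (1 + 1 / (n:ℝ)) ^ n := by positivity
      nlinarith [pow_nonneg hr0 n]
    -- 1 - r^2 ≥ 1/(2n)
    have hr2 : 1 / (2 * (n:ℝ)) ≤ 1 - r ^ 2 := by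
      have h1 : 1 - r = 1 / ((n:ℝ) + 1) := by
        rw [hr]
        field_simp
        ring
      have h2 : 1 / ((n:ℝ) + 1) ≤ 1 - r ^ 2 := by
        nlinarith [mul_nonneg hr0 (show (0:ℝ) ≤ 1 - r by linarith)]
      have h3 : 1 / (2 * (n:ℝ)) ≤ 1 / ((n:ℝ) + 1) :=
        one_div_le_one_div_of_le (by linarith) (by linarith)
      linarith
    -- combine
    have hcomb : (1 / (2 * (n:ℝ))) ^ γ * (S / 3) ≤ C := by
      calc (1 / (2 * (n:ℝ))) ^ γ * (S / 3)
          ≤ (1 - r ^ 2) ^ γ * (S * r ^ (n - 1)) := by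
            apply mul_le_mul
            · exact Real.rpow_le_rpow (by positivity) hr2 hγ.le
            · calc S / 3 = S * (1/3) := by ring
                _ ≤ S * r ^ n := mul_le_mul_of_nonneg_left hrn hS0
                _ ≤ S * r ^ (n - 1) := by
                    apply mul_le_mul_of_nonneg_left _ hS0
                    apply pow_le_pow_of_le_one hr0 hr1.le
                    omega
            · exact mul_nonneg hS0 (by positivity)
            · exact Real.rpow_nonneg h1r2 γ
        _ ≤ (1 - r ^ 2) ^ γ * G := mul_le_mul_of_nonneg_left hSG (by positivity)
        _ ≤ C := hkey
    -- finish algebra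
    have hnγ : (0:ℝ) < (n:ℝ) ^ γ := Real.rpow_pos_of_pos hnpos γ
    have h2γ : (0:ℝ) < (2:ℝ) ^ γ := Real.rpow_pos_of_pos two_pos γ
    have hexp : (1 / (2 * (n:ℝ))) ^ γ = ((2:ℝ) ^ γ * (n:ℝ) ^ γ)⁻¹ := by
      rw [one_div, Real.inv_rpow (by positivity), Real.mul_rpow (by norm_num) hnpos.le]
    have hstep : S ≤ 3 * 2 ^ γ * (n:ℝ) ^ γ * C := by
      rw [hexp, inv_mul_eq_div, div_le_iff₀ (by positivity)] at hcomb
      nlinarith [hcomb]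
    rw [Real.rpow_neg hnpos.le]
    calc ((n:ℝ) ^ γ)⁻¹ * S ≤ ((n:ℝ) ^ γ)⁻¹ * (3 * 2 ^ γ * (n:ℝ) ^ γ * C) :=
          mul_le_mul_of_nonneg_left hstep (inv_nonneg.2 hnγ.le)
      _ = 3 * 2 ^ γ * C * (((n:ℝ) ^ γ)⁻¹ * (n:ℝ) ^ γ) := by ring
      _ = 3 * 2 ^ γ * C := by rw [inv_mul_cancel₀ hnγ.ne']; ring
  · rintro ⟨M, hM⟩
    have hM0 : 0 ≤ M := by
      refine le_trans ?_ (hM 1 le_rfl)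
      apply mul_nonneg (Real.rpow_nonneg (by norm_num) _)
      exact Finset.sum_nonneg fun k _ => mul_nonneg (Nat.cast_nonneg k) (hc k)
    have hM' : ∀ n : ℕ, (∑ k ∈ Finset.Icc 1 n, (k : ℝ) * c k) ≤ M * (n : ℝ) ^ γ := by
      intro n
      rcases Nat.eq_zero_or_pos n with hn | hn
      · subst hn
        simp [Real.zero_rpow hγ.ne']
      · have hnpos : (0:ℝ) < n := by exact_mod_cast hn
        have hnγ : (0:ℝ) < (n:ℝ) ^ γ := Real.rpow_pos_of_pos hnpos γ
        have h := hM n hn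
        rw [Real.rpow_neg hnpos.le] at h
        calc (∑ k ∈ Finset.Icc 1 n, (k : ℝ) * c k)
            = (n:ℝ) ^ γ * (((n:ℝ) ^ γ)⁻¹ * ∑ k ∈ Finset.Icc 1 n, (k : ℝ) * c k) := by
              rw [← mul_assoc, mul_inv_cancel₀ hnγ.ne', one_mul]
          _ ≤ (n:ℝ) ^ γ * M := mul_le_mul_of_nonneg_left h hnγ.le
          _ = M * (n:ℝ) ^ γ := by ring
    constructor
    · exact fun z hz => (aux_hasDerivAt hc hf hz).differentiableAt.differentiableWithinAt
    · refine ⟨2 ^ γ * (M * (γ ^ γ + (2 ^ γ * γ ^ γ + 1) * 2 ^ (1 + γ))), ?_⟩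
      rintro x ⟨z, rfl⟩
      set r : ℝ := ‖(z : ℂ)‖ with hrdef
      have hr0 : 0 ≤ r := norm_nonneg _
      have hr1 : r < 1 := mem_ball_zero_iff.1 z.2
      have h1r : (0:ℝ) < 1 - r := by linarith
      have h1r2 : (0:ℝ) ≤ 1 - r ^ 2 := by nlinarith
      have hGsum : Summable (fun m : ℕ => (m : ℝ) * c m * r ^ (m - 1)) :=
        aux_summable_deriv hc (aux_hsum hf) hr0 hr1
      set Cm : ℝ := M * (γ ^ γ + (2 ^ γ * γ ^ γ + 1) * 2 ^ (1 + γ)) with hCm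
      have hCm0 : 0 ≤ Cm := by
        rw [hCm]
        apply mul_nonneg hM0
        positivity
      have hG : (∑' m : ℕ, (m : ℝ) * c m * r ^ (m - 1)) ≤ Cm * (1 - r) ^ (-γ) := by
        apply Summable.tsum_le_of_sum_le hGsum
        intro s
        obtain ⟨N, hN⟩ : ∃ N, ∀ m ∈ s, m < N := ⟨(s.sup id) + 1, fun m hm =>
          Nat.lt_succ_of_le (Finset.le_sup (f := id) hm)⟩
        calc ∑ m ∈ s, (m : ℝ) * c m * r ^ (m - 1)
            ≤ ∑ m ∈ Finset.range N, (m : ℝ) * c m * r ^ (m - 1) := by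
              apply Finset.sum_le_sum_of_subset_of_nonneg
              · intro m hm
                exact Finset.mem_range.2 (hN m hm)
              · intro m _ _
                exact mul_nonneg (mul_nonneg (Nat.cast_nonneg m) (hc m)) (by positivity)
          _ ≤ Cm * (1 - r) ^ (-γ) := aux_partial_bound hγ hc hM' hM0 hr0 hr1 N
      have hGnn : (0:ℝ) ≤ ∑' m : ℕ, (m : ℝ) * c m * r ^ (m - 1) :=
        tsum_nonneg fun m => mul_nonneg (mul_nonneg (Nat.cast_nonneg m) (hc m)) (by positivity)
      have hbase : 1 - r ^ 2 ≤ 2 * (1 - r) := by nlinarith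
      calc (1 - r ^ 2) ^ γ * ‖deriv f (z : ℂ)‖
          ≤ (1 - r ^ 2) ^ γ * ∑' m : ℕ, (m : ℝ) * c m * r ^ (m - 1) :=
            mul_le_mul_of_nonneg_left (aux_norm_deriv hc hf z.2) (Real.rpow_nonneg h1r2 γ)
        _ ≤ (2 * (1 - r)) ^ γ * ∑' m : ℕ, (m : ℝ) * c m * r ^ (m - 1) :=
            mul_le_mul_of_nonneg_right (Real.rpow_le_rpow h1r2 hbase hγ.le) hGnn
        _ ≤ (2 * (1 - r)) ^ γ * (Cm * (1 - r) ^ (-γ)) :=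
            mul_le_mul_of_nonneg_left hG (Real.rpow_nonneg (by linarith) γ)
        _ = 2 ^ γ * Cm * ((1 - r) ^ γ * (1 - r) ^ (-γ)) := by
            rw [Real.mul_rpow (by norm_num) h1r.le]
            ring
        _ = 2 ^ γ * Cm := by
            rw [← Real.rpow_add h1r, add_neg_cancel, Real.rpow_zero, mul_one]

theorem stmt6 (γ : ℝ) (hγ : 0 < γ) (f : ℂ → ℂ) (c : ℕ → ℝ) (hc : ∀ n, 0 ≤ c n)
    (hf : ∀ z ∈ Metric.ball (0:ℂ) 1, HasSum (fun n : ℕ => (c n : ℂ) * z ^ n) (f z)) :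
    MemBloch (fun s => (1 - s ^ 2) ^ γ) f ↔
      ∃ M : ℝ, ∀ n : ℕ, 1 ≤ n →
        (n : ℝ) ^ (-γ) * ∑ k ∈ Finset.Icc 1 n, (k : ℝ) * c k ≤ M := stmt6_aux γ hγ f c hc hf
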